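/- Let H be a group that splits as a non-trivial free product with amalgamation. Then for every infinite subgroup G ≤ H there exists a subgroup K with G ≤ K ≤ H, |K| = |G|, and K splits as a non-trivial free product with amalgamation. -/

import Mathlib

open Cardinal

/-- Cardinality bound for subgroup closure. -/
lemma Subgroup.cardinalMk_closure_le_max' {G : Type*} [Group G] (s : Set G) :
    #(Subgroup.closure s) ≤ max #s ℵ₀ := by
  have hsurj : Function.Surjective
      (fun l : List ↥(s ∪ s⁻¹) => (⟨(l.map ((↑) : ↥(s ∪ s⁻¹) → G)).prod, by
        refine Subgroup.list_prod_mem _ ?_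
        intro x hx
        obtain ⟨y, hy, rfl⟩ := List.mem_map.mp hx
        rcases y.2 with h | h
        · exact Subgroup.subset_closure h
        · exact (Subgroup.inv_mem_iff _).mp (Subgroup.subset_closure h)⟩ :
        ↥(Subgroup.closure s))) := by
    rintro ⟨x, hx⟩
    have hx' : x ∈ Submonoid.closure (s ∪ s⁻¹) := by
      rw [← Subgroup.closure_toSubmonoid]; exact hx
    obtain ⟨l, hl, hprod⟩ := Submonoid.exists_list_of_mem_closure hx'
    refine ⟨l.attach.map (fun y => ⟨y.1, hl y.1 y.2⟩), ?_⟩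
    ext
    simp only [List.map_map]
    rw [show ((fun (y : ↥(s ∪ s⁻¹)) => (y : G)) ∘ fun y : {x // x ∈ l} => (⟨y.1, hl y.1 y.2⟩ : ↥(s ∪ s⁻¹))) = Subtype.val from rfl]
    rw [List.attach_map_subtype_val, hprod]
  calc #(Subgroup.closure s) ≤ #(List ↥(s ∪ s⁻¹)) := Cardinal.mk_le_of_surjective hsurj
    _ ≤ max ℵ₀ #↥(s ∪ s⁻¹) := Cardinal.mk_list_le_max _
    _ ≤ max #s ℵ₀ := by
        have h1 : #↥(s ∪ s⁻¹) ≤ #s + #↥(s⁻¹) := Cardinal.mk_union_le _ _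
        have h2 : #↥(s⁻¹) = #s := by
          have himg : Inv.inv '' s = s⁻¹ := Set.image_inv_eq_inv
          rw [← himg]
          exact Cardinal.mk_image_eq inv_injective
        have h3 : #↥(s ∪ s⁻¹) ≤ max #s ℵ₀ := by
          refine (h1.trans ?_)
          rw [h2]
          rcases le_total (#s) ℵ₀ with h | h
          · exact le_max_of_le_right (Cardinal.add_le_aleph0.mpr ⟨h, h⟩)
          · rw [Cardinal.add_eq_self h]
            exact le_max_left _ _
        exact max_le (le_max_right (#s) ℵ₀) h3

/-- A membership-aware monotonicity lemma for `List.Chain'`. -/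
lemma myChain'_imp {α : Type*} {R S : α → α → Prop} :
    ∀ (l : List α), l.Chain' R → (∀ x ∈ l, ∀ y ∈ l, R x y → S x y) → l.Chain' S
  | [], _, _ => List.isChain_nil
  | [_], _, _ => List.isChain_singleton _
  | (x :: y :: t), h, hm => by
      simp only [List.Chain', List.isChain_cons_cons] at h ⊢
      refine ⟨hm x (by simp) y (by simp) h.1, ?_⟩
      exact myChain'_imp (y :: t) h.2 (fun u hu v hv => hm u (by simp [hu]) v (by simp [hv]))



/-- A group `G` splits as a non-trivial free product with amalgamation:
there are subgroups `A`, `B` with `C = A ⊓ B` proper in both, `A ∪ B`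
generates `G`, and every nonempty alternating product of elements taken
alternately from `A ∖ C` and `B ∖ C` is different from the identity. -/
def SplitsAsNontrivialAmalgam (G : Type*) [Group G] : Prop :=
  ∃ A B : Subgroup G,
    A ⊓ B ≠ A ∧ A ⊓ B ≠ B ∧
    Subgroup.closure ((A : Set G) ∪ (B : Set G)) = ⊤ ∧
    ∀ w : List G, w ≠ [] →
      (∀ x ∈ w, (x ∈ A ∧ x ∉ B) ∨ (x ∈ B ∧ x ∉ A)) →
      w.Chain' (fun x y => ¬(x ∈ A ∧ y ∈ A) ∧ ¬(x ∈ B ∧ y ∈ B)) →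
      w.prod ≠ 1

/-- The class of groups splitting as non-trivial free products with
amalgamation is bountiful. -/
theorem amalgam_bountiful {H : Type*} [Group H]
    (hH : SplitsAsNontrivialAmalgam H) :
    ∀ G : Subgroup H, Infinite G →
      ∃ K : Subgroup H, G ≤ K ∧ Cardinal.mk K = Cardinal.mk G ∧
        SplitsAsNontrivialAmalgam K := by
  intro G hG
  haveI := hG
  obtain ⟨A, B, hAne, hBne, hgen, hword⟩ := hH
  -- pick witnesses a ∈ A \ B and b ∈ B \ A
  obtain ⟨a, haA, haB⟩ : ∃ a ∈ A, a ∉ B := by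
    have h : ¬ (A ≤ A ⊓ B) := fun h => hAne (le_antisymm inf_le_left h)
    obtain ⟨x, h1, h2⟩ := SetLike.not_le_iff_exists.mp h
    exact ⟨x, h1, fun hb => h2 ⟨h1, hb⟩⟩
  obtain ⟨b, hbB, hbA⟩ : ∃ b ∈ B, b ∉ A := by
    have h : ¬ (B ≤ A ⊓ B) := fun h => hBne (le_antisymm inf_le_right h)
    obtain ⟨x, h1, h2⟩ := SetLike.not_le_iff_exists.mp h
    exact ⟨x, h1, fun ha => h2 ⟨ha, h1⟩⟩
  -- every element of H is a product of a list of elements of A ∪ B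
  have hrep : ∀ h : H, ∃ l : List H, (∀ x ∈ l, x ∈ (A : Set H) ∪ B) ∧ l.prod = h := by
    intro h
    have hmem : h ∈ Subgroup.closure ((A : Set H) ∪ B) := hgen ▸ Subgroup.mem_top h
    have hmem' : h ∈ Submonoid.closure (((A : Set H) ∪ B) ∪ ((A : Set H) ∪ B)⁻¹) := by
      rw [← Subgroup.closure_toSubmonoid]; exact hmem
    obtain ⟨l, hl, hp⟩ := Submonoid.exists_list_of_mem_closure hmem'
    refine ⟨l, fun x hx => ?_, hp⟩
    rcases hl x hx with h' | h'
    · exact h'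
    · rw [Set.mem_inv] at h'
      rcases h' with h' | h'
      · exact Or.inl ((A.inv_mem_iff).mp h')
      · exact Or.inr ((B.inv_mem_iff).mp h')
  choose L hLmem hLprod using hrep
  -- the set of letters
  set S : Set H := (⋃ g : G, {x | x ∈ L (g : H)}) ∪ {a, b} with hS
  have hSa : a ∈ S := Or.inr (by simp)
  have hSb : b ∈ S := Or.inr (by simp)
  have hSg : ∀ g : G, ∀ x ∈ L (g : H), x ∈ S :=
    fun g x hx => Or.inl (Set.mem_iUnion.mpr ⟨g, hx⟩)
  -- the recursive towers
  set F : ℕ → Subgroup H × Subgroup H := fun n => Nat.rec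
      (Subgroup.closure (S ∩ A), Subgroup.closure (S ∩ B))
      (fun _ p => (Subgroup.closure ((p.1 : Set H) ∪ ((p.2 : Set H) ∩ A)),
                   Subgroup.closure ((p.2 : Set H) ∪ ((p.1 : Set H) ∩ B)))) n with hF
  set An : ℕ → Subgroup H := fun n => (F n).1 with hAn
  set Bn : ℕ → Subgroup H := fun n => (F n).2 with hBn
  have hA0 : An 0 = Subgroup.closure (S ∩ A) := rfl
  have hB0 : Bn 0 = Subgroup.closure (S ∩ B) := rfl
  have hAsucc : ∀ n, An (n + 1) =
      Subgroup.closure ((An n : Set H) ∪ ((Bn n : Set H) ∩ A)) := fun n => rfl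
  have hBsucc : ∀ n, Bn (n + 1) =
      Subgroup.closure ((Bn n : Set H) ∪ ((An n : Set H) ∩ B)) := fun n => rfl
  have hbounds : ∀ n, An n ≤ A ∧ Bn n ≤ B := by
    intro n
    induction n with
    | zero =>
      exact ⟨(Subgroup.closure_le _).mpr Set.inter_subset_right,
             (Subgroup.closure_le _).mpr Set.inter_subset_right⟩
    | succ n ih =>
      rw [hAsucc, hBsucc]
      exact ⟨(Subgroup.closure_le _).mpr (Set.union_subset ih.1 Set.inter_subset_right),
             (Subgroup.closure_le _).mpr (Set.union_subset ih.2 Set.inter_subset_right)⟩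
  have hmonoA : ∀ n, An n ≤ An (n + 1) := by
    intro n
    rw [hAsucc]
    exact fun x hx => Subgroup.subset_closure (Or.inl hx)
  have hmonoB : ∀ n, Bn n ≤ Bn (n + 1) := by
    intro n
    rw [hBsucc]
    exact fun x hx => Subgroup.subset_closure (Or.inl hx)
  have hdirA : Directed (· ≤ ·) An := (monotone_nat_of_le_succ hmonoA).directed_le
  have hdirB : Directed (· ≤ ·) Bn := (monotone_nat_of_le_succ hmonoB).directed_le
  set Astar : Subgroup H := ⨆ n, An n with hAstar
  set Bstar : Subgroup H := ⨆ n, Bn n with hBstar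
  have hmemA : ∀ x : H, x ∈ Astar ↔ ∃ n, x ∈ An n :=
    fun x => Subgroup.mem_iSup_of_directed hdirA
  have hmemB : ∀ x : H, x ∈ Bstar ↔ ∃ n, x ∈ Bn n :=
    fun x => Subgroup.mem_iSup_of_directed hdirB
  have hAstarA : Astar ≤ A := iSup_le fun n => (hbounds n).1
  have hBstarB : Bstar ≤ B := iSup_le fun n => (hbounds n).2
  have hcrossAB : ∀ x, x ∈ Astar → x ∈ B → x ∈ Bstar := by
    intro x hx hxB
    obtain ⟨n, hn⟩ := (hmemA x).mp hx
    refine (hmemB x).mpr ⟨n + 1, ?_⟩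
    rw [hBsucc]
    exact Subgroup.subset_closure (Or.inr ⟨hn, hxB⟩)
  have hcrossBA : ∀ x, x ∈ Bstar → x ∈ A → x ∈ Astar := by
    intro x hx hxA
    obtain ⟨n, hn⟩ := (hmemB x).mp hx
    refine (hmemA x).mpr ⟨n + 1, ?_⟩
    rw [hAsucc]
    exact Subgroup.subset_closure (Or.inr ⟨hn, hxA⟩)
  have haAstar : a ∈ Astar := (hmemA a).mpr ⟨0, by rw [hA0]; exact Subgroup.subset_closure ⟨hSa, haA⟩⟩
  have hbBstar : b ∈ Bstar := (hmemB b).mpr ⟨0, by rw [hB0]; exact Subgroup.subset_closure ⟨hSb, hbB⟩⟩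
  have haBstar : a ∉ Bstar := fun h => haB (hBstarB h)
  have hbAstar : b ∉ Astar := fun h => hbA (hAstarA h)
  -- the subgroup K
  set K : Subgroup H := Subgroup.closure ((Astar : Set H) ∪ (Bstar : Set H)) with hK
  have hAK : Astar ≤ K := fun x hx => Subgroup.subset_closure (Or.inl hx)
  have hBK : Bstar ≤ K := fun x hx => Subgroup.subset_closure (Or.inr hx)
  have hGK : G ≤ K := by
    intro g hg
    rw [← hLprod g]
    refine Subgroup.list_prod_mem _ fun x hx => ?_
    have hxS : x ∈ S := hSg ⟨g, hg⟩ x hx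
    rcases hLmem g x hx with hxA | hxB
    · exact hAK ((hmemA x).mpr ⟨0, by rw [hA0]; exact Subgroup.subset_closure ⟨hxS, hxA⟩⟩)
    · exact hBK ((hmemB x).mpr ⟨0, by rw [hB0]; exact Subgroup.subset_closure ⟨hxS, hxB⟩⟩)
  -- cardinality bounds
  have hκ : ℵ₀ ≤ #G := Cardinal.aleph0_le_mk G
  have hScard : #S ≤ #G := by
    have h1 : #(⋃ g : G, {x : H | x ∈ L (g : H)}) ≤ #G * ℵ₀ := by
      refine (Cardinal.mk_iUnion_le _).trans ?_
      refine mul_le_mul_right (ciSup_le' fun g => ?_) _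
      have : {x : H | x ∈ L (g : H)}.Finite := List.finite_toSet _
      haveI := this.countable.to_subtype
      exact Cardinal.mk_le_aleph0
    have h2 : #G * ℵ₀ ≤ #G := by
      calc #G * ℵ₀ ≤ #G * #G := mul_le_mul_right hκ _
        _ = #G := Cardinal.mul_eq_self hκ
    have h3 : #({a, b} : Set H) ≤ ℵ₀ := by
      have : ({a, b} : Set H).Finite := (Set.finite_singleton b).insert a
      haveI := this.countable.to_subtype
      exact Cardinal.mk_le_aleph0
    calc #S ≤ #(⋃ g : G, {x : H | x ∈ L (g : H)}) + #({a, b} : Set H) :=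
          Cardinal.mk_union_le _ _
      _ ≤ #G + ℵ₀ := add_le_add (h1.trans h2) h3
      _ = #G := Cardinal.add_eq_left hκ hκ
  have hAncard : ∀ n, #(An n) ≤ #G ∧ #(Bn n) ≤ #G := by
    intro n
    induction n with
    | zero =>
      constructor
      · rw [hA0]
        refine (Subgroup.cardinalMk_closure_le_max' _).trans (max_le ?_ hκ)
        exact (Cardinal.mk_le_mk_of_subset Set.inter_subset_left).trans hScard
      · rw [hB0]
        refine (Subgroup.cardinalMk_closure_le_max' _).trans (max_le ?_ hκ)
        exact (Cardinal.mk_le_mk_of_subset Set.inter_subset_left).trans hScard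
    | succ n ih =>
      have key : ∀ (X Y Z : Subgroup H), #X ≤ #G → #Y ≤ #G →
          #(Subgroup.closure ((X : Set H) ∪ ((Y : Set H) ∩ Z))) ≤ #G := by
        intro X Y Z hX hY
        refine (Subgroup.cardinalMk_closure_le_max' _).trans (max_le ?_ hκ)
        calc #(↥((X : Set H) ∪ ((Y : Set H) ∩ Z))) ≤ #(X : Set H) + #(↥((Y : Set H) ∩ Z)) :=
              Cardinal.mk_union_le _ _
          _ ≤ #G + #G := add_le_add hX
              ((Cardinal.mk_le_mk_of_subset Set.inter_subset_left).trans hY)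
          _ = #G := Cardinal.add_eq_self hκ
      constructor
      · rw [hAsucc]; exact key _ _ _ ih.1 ih.2
      · rw [hBsucc]; exact key _ _ _ ih.2 ih.1
  have hstarcard : #Astar ≤ #G ∧ #Bstar ≤ #G := by
    have key : ∀ (T : ℕ → Subgroup H), Directed (· ≤ ·) T → (∀ n, #(T n) ≤ #G) →
        #(⨆ n, T n : Subgroup H) ≤ #G := by
      intro T hdir hcard
      have hset : ((⨆ n, T n : Subgroup H) : Set H) = ⋃ i : ULift.{_} ℕ, (T i.down : Set H) := by
        rw [Subgroup.coe_iSup_of_directed hdir]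
        ext x
        simp only [Set.mem_iUnion]
        exact ⟨fun ⟨n, h⟩ => ⟨⟨n⟩, h⟩, fun ⟨i, h⟩ => ⟨i.down, h⟩⟩
      have : #(⨆ n, T n : Subgroup H) = #(↥(⋃ i : ULift.{_} ℕ, (T i.down : Set H))) := by
        rw [← hset]; rfl
      rw [this]
      refine (Cardinal.mk_iUnion_le _).trans ?_
      have h1 : #(ULift.{_} ℕ) ≤ #G := Cardinal.mk_le_aleph0.trans hκ
      have h2 : (⨆ i : ULift.{_} ℕ, #((T i.down : Set H))) ≤ #G := ciSup_le' fun i => hcard i.down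
      calc #(ULift.{_} ℕ) * (⨆ i : ULift.{_} ℕ, #((T i.down : Set H))) ≤ #G * #G :=
            mul_le_mul' h1 h2
        _ = #G := Cardinal.mul_eq_self hκ
    exact ⟨key An hdirA fun n => (hAncard n).1, key Bn hdirB fun n => (hAncard n).2⟩
  have hKcard : #K = #G := by
    refine le_antisymm ?_ ?_
    · rw [hK]
      refine (Subgroup.cardinalMk_closure_le_max' _).trans (max_le ?_ hκ)
      calc #(↥((Astar : Set H) ∪ (Bstar : Set H))) ≤ #Astar + #Bstar := Cardinal.mk_union_le _ _
        _ ≤ #G + #G := add_le_add hstarcard.1 hstarcard.2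
        _ = #G := Cardinal.add_eq_self hκ
    · exact Cardinal.mk_le_mk_of_subset hGK
  -- the splitting of K
  refine ⟨K, hGK, hKcard, ?_⟩
  refine ⟨Astar.subgroupOf K, Bstar.subgroupOf K, ?_, ?_, ?_, ?_⟩
  -- purity of letters
  · intro h
    have hmem : (⟨a, hAK haAstar⟩ : K) ∈ Astar.subgroupOf K := Subgroup.mem_subgroupOf.mpr haAstar
    rw [← h] at hmem
    exact haBstar (Subgroup.mem_subgroupOf.mp hmem.2)
  · intro h
    have hmem : (⟨b, hBK hbBstar⟩ : K) ∈ Bstar.subgroupOf K := Subgroup.mem_subgroupOf.mpr hbBstar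
    rw [← h] at hmem
    exact hbAstar (Subgroup.mem_subgroupOf.mp hmem.1)
  · rw [eq_top_iff]
    rintro ⟨x, hx⟩ -
    have hx' : x ∈ Subgroup.closure ((Astar : Set H) ∪ (Bstar : Set H)) := hx
    induction hx' using Subgroup.closure_induction with
    | mem y hy =>
      rcases hy with hy | hy
      · exact Subgroup.subset_closure (Or.inl (Subgroup.mem_subgroupOf.mpr hy))
      · exact Subgroup.subset_closure (Or.inr (Subgroup.mem_subgroupOf.mpr hy))
    | one => exact one_mem _
    | mul y z hy hz ihy ihz => exact mul_mem (ihy hy) (ihz hz)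
    | inv y hy ihy => exact inv_mem (ihy hy)
  · intro w hw hpure hchain
    have toA' : ∀ x ∈ w, (x : H) ∈ A → x ∈ Astar.subgroupOf K := by
      intro x hx hxA
      rcases hpure x hx with ⟨h1, _⟩ | ⟨h1, h2⟩
      · exact h1
      · exact (h2 (Subgroup.mem_subgroupOf.mpr
          (hcrossBA _ (Subgroup.mem_subgroupOf.mp h1) hxA))).elim
    have toB' : ∀ x ∈ w, (x : H) ∈ B → x ∈ Bstar.subgroupOf K := by
      intro x hx hxB
      rcases hpure x hx with ⟨h1, h2⟩ | ⟨h1, _⟩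
      · exact (h2 (Subgroup.mem_subgroupOf.mpr
          (hcrossAB _ (Subgroup.mem_subgroupOf.mp h1) hxB))).elim
      · exact h1
    have hpureH : ∀ x ∈ w, ((x : H) ∈ A ∧ (x : H) ∉ B) ∨ ((x : H) ∈ B ∧ (x : H) ∉ A) := by
      intro x hx
      rcases hpure x hx with ⟨h1, h2⟩ | ⟨h1, h2⟩
      · have hxA : (x : H) ∈ Astar := Subgroup.mem_subgroupOf.mp h1
        exact Or.inl ⟨hAstarA hxA,
          fun hB => h2 (Subgroup.mem_subgroupOf.mpr (hcrossAB _ hxA hB))⟩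
      · have hxB : (x : H) ∈ Bstar := Subgroup.mem_subgroupOf.mp h1
        exact Or.inr ⟨hBstarB hxB,
          fun hA => h2 (Subgroup.mem_subgroupOf.mpr (hcrossBA _ hxB hA))⟩
    intro hcontra
    refine hword (w.map ((↑) : K → H)) ?_ ?_ ?_ ?_
    · intro h
      exact hw (List.map_eq_nil_iff.mp h)
    · intro x hx
      obtain ⟨y, hy, rfl⟩ := List.mem_map.mp hx
      exact hpureH y hy
    · simp only [List.Chain', List.isChain_map]
      refine myChain'_imp w hchain ?_
      intro x hx y hy hR
      constructor
      · rintro ⟨hxA, hyA⟩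
        exact hR.1 ⟨toA' x hx hxA, toA' y hy hyA⟩
      · rintro ⟨hxB, hyB⟩
        exact hR.2 ⟨toB' x hx hxB, toB' y hy hyB⟩
    · have h1 : (List.map Subtype.val w).prod = K.subtype w.prod := (map_list_prod K.subtype w).symm
      rw [h1, hcontra, map_one]
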